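/- Let a > 0 and β > 0 be real numbers, let p ∈ ℝ² (Euclidean norm), and define F : ℝ² → ℝ by F(q) = (1/2)‖q − p‖² + β·a‖q‖/(1 + a‖q‖). Then F is differentiable at every q ≠ 0, and if q* ≠ 0 is a critical point of F (its Fréchet derivative at q* vanishes), then (‖q*‖ + β·a/(1 + a‖q*‖)²) · (q*/‖q*‖) = p; in particular p ≠ 0, q* is a positive scalar multiple of p, and y := ‖q*‖ satisfies y + β·a/(1 + a·y)² = ‖p‖, equivalently a²·y³ + a·(2 − a‖p‖)·y² + (1 − 2a‖p‖)·y − ‖p‖ + a·β = 0. -/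

import Mathlib

lemma my_hasFDerivAt_norm {x : EuclideanSpace ℝ (Fin 2)} (hx : x ≠ 0) :
    HasFDerivAt (fun q : EuclideanSpace ℝ (Fin 2) => ‖q‖) (innerSL ℝ (‖x‖⁻¹ • x)) x := by
  have hn : ‖x‖ ≠ 0 := norm_ne_zero_iff.mpr hx
  have h1 : HasFDerivAt (fun q : EuclideanSpace ℝ (Fin 2) => ‖q‖^2)
      (2 • innerSL ℝ x) x := by
    simpa using (hasFDerivAt_id x).norm_sq
  have h2 := h1.sqrt (by positivity)
  have hfun : (fun q : EuclideanSpace ℝ (Fin 2) => Real.sqrt (‖q‖^2)) = fun q => ‖q‖ := by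
    funext q; exact Real.sqrt_sq (norm_nonneg q)
  rw [hfun] at h2
  refine h2.congr_fderiv ?_
  ext y
  simp [Real.sqrt_sq (norm_nonneg x), real_inner_smul_left]
  field_simp

lemma my_hasFDerivAt_F (a β : ℝ) (ha : 0 < a)
    (p : EuclideanSpace ℝ (Fin 2)) {x : EuclideanSpace ℝ (Fin 2)} (hx : x ≠ 0) :
    HasFDerivAt (fun q : EuclideanSpace ℝ (Fin 2) =>
        (1/2) * ‖q - p‖^2 + β * (a * ‖q‖ / (1 + a * ‖q‖)))
      (innerSL ℝ ((x - p) + (β * a / (1 + a * ‖x‖)^2) • (‖x‖⁻¹ • x))) x := by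
  have hden : (1 : ℝ) + a * ‖x‖ ≠ 0 := by positivity
  have hA : HasFDerivAt (fun q : EuclideanSpace ℝ (Fin 2) => (1/2) * ‖q - p‖^2)
      ((1/2 : ℝ) • (2 • innerSL ℝ (x - p))) x := by
    have h := ((hasFDerivAt_id x).sub_const p).norm_sq
    simpa using h.const_mul (1/2 : ℝ)
  have hφ : HasDerivAt (fun t : ℝ => β * (a * t / (1 + a * t)))
      (β * (a / (1 + a * ‖x‖)^2)) ‖x‖ := by
    have hnum : HasDerivAt (fun t : ℝ => a * t) a ‖x‖ := by
      simpa using (hasDerivAt_id ‖x‖).const_mul a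
    have hdenl : HasDerivAt (fun t : ℝ => 1 + a * t) a ‖x‖ := hnum.const_add 1
    have h := (hnum.div hdenl hden).const_mul β
    refine h.congr_deriv ?_
    field_simp
    ring
  have hB := hφ.comp_hasFDerivAt x (my_hasFDerivAt_norm hx)
  have h := hA.add hB
  refine h.congr_fderiv ?_
  ext y
  simp [real_inner_smul_left, inner_add_left, inner_sub_left, smul_smul]
  left; left; ring

theorem smoothed_L0_prox_critical_point
    (a β : ℝ) (ha : 0 < a) (hβ : 0 < β)
    (p : EuclideanSpace ℝ (Fin 2))
    (F : EuclideanSpace ℝ (Fin 2) → ℝ)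
    (hF : ∀ q, F q = (1/2) * ‖q - p‖^2 + β * (a * ‖q‖ / (1 + a * ‖q‖))) :
    (∀ q : EuclideanSpace ℝ (Fin 2), q ≠ 0 → DifferentiableAt ℝ F q) ∧
    (∀ q : EuclideanSpace ℝ (Fin 2), q ≠ 0 → fderiv ℝ F q = 0 →
      (‖q‖ + β*a/(1 + a*‖q‖)^2) • (‖q‖⁻¹ • q) = p ∧
      p ≠ 0 ∧
      (∃ c : ℝ, 0 < c ∧ q = c • p) ∧
      ‖q‖ + β*a/(1 + a*‖q‖)^2 = ‖p‖ ∧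
      a^2*‖q‖^3 + a*(2 - a*‖p‖)*‖q‖^2 + (1 - 2*a*‖p‖)*‖q‖ - ‖p‖ + a*β = 0) := by
  have hFe : F = fun q => (1/2) * ‖q - p‖^2 + β * (a * ‖q‖ / (1 + a * ‖q‖)) := funext hF
  subst hFe
  refine ⟨fun q hq => (my_hasFDerivAt_F a β ha p hq).differentiableAt, fun q hq h0 => ?_⟩
  have hn : ‖q‖ ≠ 0 := norm_ne_zero_iff.mpr hq
  have hnp : (0:ℝ) < ‖q‖ := norm_pos_iff.mpr hq
  have hden : (0:ℝ) < 1 + a * ‖q‖ := by positivity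
  set c : ℝ := β * a / (1 + a * ‖q‖)^2 with hc
  have hcp : 0 < c := by positivity
  have hL := (my_hasFDerivAt_F a β ha p hq).fderiv
  rw [h0] at hL
  have hv : (q - p) + c • (‖q‖⁻¹ • q) = 0 := by
    have := congrArg (fun (L : EuclideanSpace ℝ (Fin 2) →L[ℝ] ℝ) =>
      L ((q - p) + c • (‖q‖⁻¹ • q))) hL.symm
    simp only [ContinuousLinearMap.zero_apply, innerSL_apply_apply] at this
    rw [← hc] at this
    exact inner_self_eq_zero.mp this
  have h1 : (‖q‖ + c) • (‖q‖⁻¹ • q) = p := by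
    rw [add_smul, smul_smul, mul_inv_cancel₀ hn, one_smul]
    linear_combination (norm := module) hv
  have hu : ‖(‖q‖⁻¹ • q)‖ = 1 := norm_smul_inv_norm hq
  have hsc : (0:ℝ) < ‖q‖ + c := by positivity
  have hnormp : ‖q‖ + c = ‖p‖ := by
    rw [← h1, norm_smul, hu, mul_one, Real.norm_eq_abs, abs_of_pos hsc]
  have hpne : p ≠ 0 := by
    rw [← norm_pos_iff, ← hnormp]; exact hsc
  refine ⟨h1, hpne, ⟨‖q‖ / (‖q‖ + c), by positivity, ?_⟩, hnormp, ?_⟩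
  · rw [← h1, smul_smul, smul_smul]
    rw [show ‖q‖ / (‖q‖ + c) * (‖q‖ + c) * ‖q‖⁻¹ = 1 by field_simp]
    rw [one_smul]
  · have h2 : ‖q‖ + β * a / (1 + a * ‖q‖)^2 = ‖p‖ := hnormp
    have hd2 : ((1:ℝ) + a * ‖q‖)^2 ≠ 0 := by positivity
    field_simp at h2
    nlinarith [h2, sq_nonneg (1 + a*‖q‖)]
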